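/- arXiv:math/0603153 — 6 statements merged into one kernel-verified Lean document; each statement's English description precedes it below -/
import Mathlib

section
/- The function f(z) = sin(z) satisfies the sigma-function identity: for all complex x, y, z, w, sin(x)sin(y)sin(z)sin(w) = sin((x+y+z-w)/2)sin((x+y-z+w)/2)sin((x-y+z+w)/2)sin((-x+y+z+w)/2) + sin((x+y+z+w)/2)sin((x+y-z-w)/2)sin((x-y+z-w)/2)sin((x-y-z+w)/2). -/
set_option maxHeartbeats 1000000

open Complex

private lemma sin_eq' (t : ℂ) :
    Complex.sin t = (Complex.exp (-t * Complex.I) - Complex.exp (t * Complex.I)) * Complex.I / 2 := by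
  rw [Complex.sin]

private lemma alg (a b c d : ℂ) (ha : a ≠ 0) (hb : b ≠ 0) (hc : c ≠ 0) (hd : d ≠ 0) :
    ((a^4)⁻¹ - a^4) * I / 2 * (((b^4)⁻¹ - b^4) * I / 2) * (((c^4)⁻¹ - c^4) * I / 2) *
      (((d^4)⁻¹ - d^4) * I / 2) =
    (((a*b*c*d⁻¹)^2)⁻¹ - (a*b*c*d⁻¹)^2) * I / 2 *
        ((((a*b*c⁻¹*d)^2)⁻¹ - (a*b*c⁻¹*d)^2) * I / 2) *
        ((((a*b⁻¹*c*d)^2)⁻¹ - (a*b⁻¹*c*d)^2) * I / 2) *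
        ((((a⁻¹*b*c*d)^2)⁻¹ - (a⁻¹*b*c*d)^2) * I / 2) +
      (((a*b*c*d)^2)⁻¹ - (a*b*c*d)^2) * I / 2 *
        ((((a*b*c⁻¹*d⁻¹)^2)⁻¹ - (a*b*c⁻¹*d⁻¹)^2) * I / 2) *
        ((((a*b⁻¹*c*d⁻¹)^2)⁻¹ - (a*b⁻¹*c*d⁻¹)^2) * I / 2) *
        ((((a*b⁻¹*c⁻¹*d)^2)⁻¹ - (a*b⁻¹*c⁻¹*d)^2) * I / 2) := by
  simp only [mul_pow, inv_pow, mul_inv, inv_inv]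
  field_simp [ha, hb, hc, hd]
  ring

theorem stmt_1 : ∀ x y z w : ℂ,
    sin x * sin y * sin z * sin w =
      sin ((x+y+z-w)/2) * sin ((x+y-z+w)/2) * sin ((x-y+z+w)/2) * sin ((-x+y+z+w)/2) +
      sin ((x+y+z+w)/2) * sin ((x+y-z-w)/2) * sin ((x-y+z-w)/2) * sin ((x-y-z+w)/2) := by
  intro x y z w
  have key : ∀ t : ℂ, Complex.sin t =
      ((Complex.exp (t / 4 * Complex.I))⁻¹ ^ 4 - Complex.exp (t / 4 * Complex.I) ^ 4) *
        Complex.I / 2 := by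
    intro t
    rw [sin_eq', ← Complex.exp_neg, ← Complex.exp_nat_mul, ← Complex.exp_nat_mul]
    ring_nf
  have half : ∀ s : ℂ, Complex.exp (s / 2 / 4 * Complex.I) ^ 4 =
      Complex.exp (s / 4 * Complex.I) ^ 2 := by
    intro s
    rw [← Complex.exp_nat_mul, ← Complex.exp_nat_mul]
    ring_nf
  have eab : ∀ s t : ℂ, Complex.exp ((s + t) / 4 * Complex.I) =
      Complex.exp (s / 4 * Complex.I) * Complex.exp (t / 4 * Complex.I) := by
    intro s t
    rw [← Complex.exp_add]; ring_nf
  have esub : ∀ s t : ℂ, Complex.exp ((s - t) / 4 * Complex.I) =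
      Complex.exp (s / 4 * Complex.I) * (Complex.exp (t / 4 * Complex.I))⁻¹ := by
    intro s t
    rw [← Complex.exp_neg, ← Complex.exp_add]; ring_nf
  have eneg : ∀ s : ℂ, Complex.exp ((-s) / 4 * Complex.I) =
      (Complex.exp (s / 4 * Complex.I))⁻¹ := by
    intro s
    rw [← Complex.exp_neg]; ring_nf
  simp only [key]
  simp only [inv_pow]
  simp only [half]
  simp only [eab, esub, eneg]
  exact alg _ _ _ _ (Complex.exp_ne_zero _) (Complex.exp_ne_zero _) (Complex.exp_ne_zero _)
    (Complex.exp_ne_zero _)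
end

section
/- If an entire function f : ℂ → ℂ satisfies the sigma-function identity, then so does g(z) = f(az)·e^{αz² + β} for any complex constants a, α, β. -/
open Complex

theorem stmt_2 (f : ℂ → ℂ) (hf : Differentiable ℂ f)
    (hid : ∀ x y z w : ℂ,
      f x * f y * f z * f w -
        f ((x+y+z-w)/2) * f ((x+y-z+w)/2) * f ((x-y+z+w)/2) * f ((-x+y+z+w)/2) -
        f ((x+y+z+w)/2) * f ((x+y-z-w)/2) * f ((x-y+z-w)/2) * f ((x-y-z+w)/2) = 0)
    (a α β : ℂ) :
    ∀ x y z w : ℂ,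
      (fun u => f (a * u) * exp (α * u ^ 2 + β)) x *
        (fun u => f (a * u) * exp (α * u ^ 2 + β)) y *
        (fun u => f (a * u) * exp (α * u ^ 2 + β)) z *
        (fun u => f (a * u) * exp (α * u ^ 2 + β)) w -
      (fun u => f (a * u) * exp (α * u ^ 2 + β)) ((x+y+z-w)/2) *
        (fun u => f (a * u) * exp (α * u ^ 2 + β)) ((x+y-z+w)/2) *
        (fun u => f (a * u) * exp (α * u ^ 2 + β)) ((x-y+z+w)/2) *
        (fun u => f (a * u) * exp (α * u ^ 2 + β)) ((-x+y+z+w)/2) -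
      (fun u => f (a * u) * exp (α * u ^ 2 + β)) ((x+y+z+w)/2) *
        (fun u => f (a * u) * exp (α * u ^ 2 + β)) ((x+y-z-w)/2) *
        (fun u => f (a * u) * exp (α * u ^ 2 + β)) ((x-y+z-w)/2) *
        (fun u => f (a * u) * exp (α * u ^ 2 + β)) ((x-y-z+w)/2) = 0 := by

  intro x y z w
  simp only
  have h := hid (a*x) (a*y) (a*z) (a*w)
  have e1 : a*((x+y+z-w)/2) = (a*x+a*y+a*z-a*w)/2 := by ring
  have e2 : a*((x+y-z+w)/2) = (a*x+a*y-a*z+a*w)/2 := by ring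
  have e3 : a*((x-y+z+w)/2) = (a*x-a*y+a*z+a*w)/2 := by ring
  have e4 : a*((-x+y+z+w)/2) = (-(a*x)+a*y+a*z+a*w)/2 := by ring
  have e5 : a*((x+y+z+w)/2) = (a*x+a*y+a*z+a*w)/2 := by ring
  have e6 : a*((x+y-z-w)/2) = (a*x+a*y-a*z-a*w)/2 := by ring
  have e7 : a*((x-y+z-w)/2) = (a*x-a*y+a*z-a*w)/2 := by ring
  have e8 : a*((x-y-z+w)/2) = (a*x-a*y-a*z+a*w)/2 := by ring
  rw [e1, e2, e3, e4, e5, e6, e7, e8]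
  have E1 : exp (α*x^2+β) * exp (α*y^2+β) * exp (α*z^2+β) * exp (α*w^2+β)
      = exp (α*(x^2+y^2+z^2+w^2)+4*β) := by
    rw [← Complex.exp_add, ← Complex.exp_add, ← Complex.exp_add]; ring_nf
  have E2 : exp (α*((x+y+z-w)/2)^2+β) * exp (α*((x+y-z+w)/2)^2+β) *
      exp (α*((x-y+z+w)/2)^2+β) * exp (α*((-x+y+z+w)/2)^2+β)
      = exp (α*(x^2+y^2+z^2+w^2)+4*β) := by
    rw [← Complex.exp_add, ← Complex.exp_add, ← Complex.exp_add]; ring_nf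
  have E3 : exp (α*((x+y+z+w)/2)^2+β) * exp (α*((x+y-z-w)/2)^2+β) *
      exp (α*((x-y+z-w)/2)^2+β) * exp (α*((x-y-z+w)/2)^2+β)
      = exp (α*(x^2+y^2+z^2+w^2)+4*β) := by
    rw [← Complex.exp_add, ← Complex.exp_add, ← Complex.exp_add]; ring_nf
  have T1 : f (a*x) * exp (α*x^2+β) * (f (a*y) * exp (α*y^2+β)) *
      (f (a*z) * exp (α*z^2+β)) * (f (a*w) * exp (α*w^2+β))
      = f (a*x) * f (a*y) * f (a*z) * f (a*w) * exp (α*(x^2+y^2+z^2+w^2)+4*β) := by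
    rw [← E1]; ring
  have T2 : f ((a*x+a*y+a*z-a*w)/2) * exp (α*((x+y+z-w)/2)^2+β) *
      (f ((a*x+a*y-a*z+a*w)/2) * exp (α*((x+y-z+w)/2)^2+β)) *
      (f ((a*x-a*y+a*z+a*w)/2) * exp (α*((x-y+z+w)/2)^2+β)) *
      (f ((-(a*x)+a*y+a*z+a*w)/2) * exp (α*((-x+y+z+w)/2)^2+β))
      = f ((a*x+a*y+a*z-a*w)/2) * f ((a*x+a*y-a*z+a*w)/2) * f ((a*x-a*y+a*z+a*w)/2) *
        f ((-(a*x)+a*y+a*z+a*w)/2) * exp (α*(x^2+y^2+z^2+w^2)+4*β) := by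
    rw [← E2]; ring
  have T3 : f ((a*x+a*y+a*z+a*w)/2) * exp (α*((x+y+z+w)/2)^2+β) *
      (f ((a*x+a*y-a*z-a*w)/2) * exp (α*((x+y-z-w)/2)^2+β)) *
      (f ((a*x-a*y+a*z-a*w)/2) * exp (α*((x-y+z-w)/2)^2+β)) *
      (f ((a*x-a*y-a*z+a*w)/2) * exp (α*((x-y-z+w)/2)^2+β))
      = f ((a*x+a*y+a*z+a*w)/2) * f ((a*x+a*y-a*z-a*w)/2) * f ((a*x-a*y+a*z-a*w)/2) *
        f ((a*x-a*y-a*z+a*w)/2) * exp (α*(x^2+y^2+z^2+w^2)+4*β) := by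
    rw [← E3]; ring
  rw [T1, T2, T3, ← sub_mul, ← sub_mul, h, zero_mul]
end

section
/- If f is a nonzero odd entire function satisfying (f'(0))³ f(2z) = f(z)³f'''(z) - 3f(z)²f'(z)f''(z) + 2f(z)f'(z)³ for all z ∈ ℂ, then f'(0) ≠ 0. -/
open Filter Topology

private lemma D1' (g : ℂ → ℂ) (k : ℕ) (z : ℂ) (hg : DifferentiableAt ℂ g z) :
    deriv (fun w => w ^ (k + 3) * g w) z
      = ((k : ℂ) + 3) * z ^ (k + 2) * g z + z ^ (k + 3) * deriv g z := by
  rw [deriv_fun_mul (differentiableAt_pow _) hg, deriv_pow_field]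
  have e : k + 3 - 1 = k + 2 := by omega
  rw [e]; push_cast; ring

private lemma D2' (a b : ℂ → ℂ) (c : ℂ) (k : ℕ) (z : ℂ)
    (ha : DifferentiableAt ℂ a z) (hb : DifferentiableAt ℂ b z) :
    deriv (fun w => c * w ^ (k + 2) * a w + w ^ (k + 3) * b w) z
      = (c * ((k : ℂ) + 2) * z ^ (k + 1) * a z + c * z ^ (k + 2) * deriv a z)
        + (((k : ℂ) + 3) * z ^ (k + 2) * b z + z ^ (k + 3) * deriv b z) := by
  rw [deriv_fun_add (((differentiableAt_pow _).const_mul _).fun_mul ha) ((differentiableAt_pow _).fun_mul hb),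
    deriv_fun_mul ((differentiableAt_pow _).const_mul _) ha,
    deriv_fun_mul (differentiableAt_pow _) hb,
    deriv_const_mul _ (differentiableAt_pow _), deriv_pow_field, deriv_pow_field]
  have e1 : k + 2 - 1 = k + 1 := by omega
  have e2 : k + 3 - 1 = k + 2 := by omega
  rw [e1, e2]; push_cast; ring

private lemma D3' (a b c : ℂ → ℂ) (c1 c2 : ℂ) (k : ℕ) (z : ℂ)
    (ha : DifferentiableAt ℂ a z) (hb : DifferentiableAt ℂ b z) (hc : DifferentiableAt ℂ c z) :
    deriv (fun w => c1 * w ^ (k + 1) * a w + c2 * w ^ (k + 2) * b w + w ^ (k + 3) * c w) z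
      = ((c1 * ((k : ℂ) + 1) * z ^ k * a z + c1 * z ^ (k + 1) * deriv a z)
        + (c2 * ((k : ℂ) + 2) * z ^ (k + 1) * b z + c2 * z ^ (k + 2) * deriv b z))
        + (((k : ℂ) + 3) * z ^ (k + 2) * c z + z ^ (k + 3) * deriv c z) := by
  rw [deriv_fun_add (((((differentiableAt_pow _).const_mul _).fun_mul ha)).fun_add
      (((differentiableAt_pow _).const_mul _).fun_mul hb)) ((differentiableAt_pow _).fun_mul hc),
    deriv_fun_add ((((differentiableAt_pow _).const_mul _).fun_mul ha))
      (((differentiableAt_pow _).const_mul _).fun_mul hb),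
    deriv_fun_mul ((differentiableAt_pow _).const_mul _) ha,
    deriv_fun_mul ((differentiableAt_pow _).const_mul _) hb,
    deriv_fun_mul (differentiableAt_pow _) hc,
    deriv_const_mul _ (differentiableAt_pow _), deriv_const_mul _ (differentiableAt_pow _),
    deriv_pow_field, deriv_pow_field, deriv_pow_field]
  have e1 : k + 1 - 1 = k := by omega
  have e2 : k + 2 - 1 = k + 1 := by omega
  have e3 : k + 3 - 1 = k + 2 := by omega
  rw [e1, e2, e3]; push_cast; ring

theorem stmt_10 (f : ℂ → ℂ) (hf : Differentiable ℂ f)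
    (hodd : ∀ z : ℂ, f (-z) = -f z)
    (hne : ∃ z : ℂ, f z ≠ 0)
    (hde : ∀ z : ℂ, (deriv f 0) ^ 3 * f (2 * z) =
      f z ^ 3 * iteratedDeriv 3 f z - 3 * f z ^ 2 * deriv f z * iteratedDeriv 2 f z +
        2 * f z * (deriv f z) ^ 3) :
    deriv f 0 ≠ 0 := by
  intro h0
  have hf0 : f 0 = 0 := by
    have h := hodd 0
    rw [neg_zero] at h
    have h2 : f 0 + f 0 = 0 := by linear_combination h
    exact add_self_eq_zero.mp h2
  have hE : ∀ z, f z ^ 3 * iteratedDeriv 3 f z - 3 * f z ^ 2 * deriv f z * iteratedDeriv 2 f z +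
      2 * f z * (deriv f z) ^ 3 = 0 := by
    intro z
    rw [← hde z, h0]
    ring
  have hA0 : AnalyticAt ℂ f 0 := hf.analyticAt 0
  -- f is not eventually zero near 0
  have hnev : ¬ ∀ᶠ z in 𝓝 (0 : ℂ), f z = 0 := by
    intro h
    obtain ⟨z, hz⟩ := hne
    apply hz
    have hAU : AnalyticOnNhd ℂ f Set.univ := Complex.analyticOnNhd_univ_iff_differentiable.mpr hf
    have := hAU.eqOn_zero_of_preconnected_of_eventuallyEq_zero isPreconnected_univ
      (Set.mem_univ (0 : ℂ)) (by simpa [Filter.EventuallyEq] using h)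
    exact this (Set.mem_univ z)
  -- the order of vanishing is a finite natural number
  have hord : analyticOrderAt f 0 ≠ ⊤ := fun h => hnev (analyticOrderAt_eq_top.mp h)
  obtain ⟨m, hm⟩ : ∃ m : ℕ, analyticOrderAt f 0 = m := by
    lift analyticOrderAt f 0 to ℕ using hord with m hm
    exact ⟨m, rfl⟩
  obtain ⟨g, hg, hg0, hfg⟩ := (hA0.analyticOrderAt_eq_natCast).mp hm
  have hfg : ∀ᶠ z in 𝓝 (0 : ℂ), f z = z ^ m * g z := by
    filter_upwards [hfg] with z hz
    simpa using hz
  -- m ≥ 3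
  have hm0 : m ≠ 0 := by
    intro h
    subst h
    have := hfg.self_of_nhds
    simp [hf0] at this
    exact hg0 this.symm
  have hm1 : m ≠ 1 := by
    intro h
    subst h
    have h1 : deriv f 0 = deriv (fun z : ℂ => z ^ 1 * g z) 0 := Filter.EventuallyEq.deriv_eq hfg
    have h2 : deriv (fun z : ℂ => z ^ 1 * g z) 0 = g 0 := by
      rw [deriv_fun_mul (differentiableAt_pow _) hg.differentiableAt, deriv_pow_field]
      norm_num
    rw [h0, h2] at h1
    exact hg0 h1.symm
  have hm2 : m ≠ 2 := by
    intro h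
    subst h
    have htneg : Filter.Tendsto (fun z : ℂ => -z) (𝓝 0) (𝓝 0) := by
      simpa using (continuous_neg.tendsto (0 : ℂ))
    have hneg : ∀ᶠ z in 𝓝 (0 : ℂ), f (-z) = (-z) ^ 2 * g (-z) := htneg.eventually hfg
    have hkey : ∀ᶠ z in 𝓝[≠] (0 : ℂ), g (-z) + g z = 0 := by
      rw [eventually_nhdsWithin_iff]
      filter_upwards [hneg, hfg] with z h1 h2 hz
      have h3 := hodd z
      rw [h1, h2] at h3
      have h4 : z ^ 2 * (g (-z) + g z) = 0 := by linear_combination h3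
      rcases mul_eq_zero.mp h4 with h5 | h5
      · exact absurd (pow_eq_zero_iff (by norm_num)|>.mp h5) hz
      · exact h5
    have hc : Filter.Tendsto (fun z : ℂ => g (-z) + g z) (𝓝[≠] 0) (𝓝 (g 0 + g 0)) := by
      apply Filter.Tendsto.mono_left _ nhdsWithin_le_nhds
      have hgneg : Filter.Tendsto (fun z : ℂ => g (-z)) (𝓝 0) (𝓝 (g 0)) := by
        have := hg.continuousAt.tendsto.comp htneg
        exact this
      exact hgneg.add hg.continuousAt.tendsto
    have hz : Filter.Tendsto (fun z : ℂ => g (-z) + g z) (𝓝[≠] 0) (𝓝 0) := by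
      apply Filter.Tendsto.congr' _ tendsto_const_nhds
      filter_upwards [hkey] with z hz using hz.symm
    have := tendsto_nhds_unique hc hz
    have hgg : g 0 + g 0 = 0 := this
    exact hg0 (add_self_eq_zero.mp hgg)
  obtain ⟨k, rfl⟩ : ∃ k : ℕ, m = k + 3 := by
    rcases m with _ | _ | _ | m
    · exact absurd rfl hm0
    · exact absurd rfl hm1
    · exact absurd rfl hm2
    · exact ⟨m, rfl⟩
  -- set up a neighborhood where g is analytic, and its derivatives
  have hev := hg.eventually_analyticAt
  rw [Filter.eventually_iff, mem_nhds_iff] at hev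
  obtain ⟨t, hts, hto, ht0⟩ := hev
  have hgt : AnalyticOnNhd ℂ g t := fun y hy => hts hy
  have hg1t : AnalyticOnNhd ℂ (deriv g) t := hgt.deriv
  have hg2t : AnalyticOnNhd ℂ (deriv (deriv g)) t := hg1t.deriv
  have hg3t : AnalyticOnNhd ℂ (deriv (deriv (deriv g))) t := hg2t.deriv
  have htn : t ∈ 𝓝 (0 : ℂ) := hto.mem_nhds ht0
  have htev : ∀ᶠ z in 𝓝 (0 : ℂ), z ∈ t := Filter.eventually_of_mem htn (fun x hx => hx)
  -- first derivative
  have hf1 : ∀ᶠ z in 𝓝 (0 : ℂ), deriv f z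
      = ((k : ℂ) + 3) * z ^ (k + 2) * g z + z ^ (k + 3) * deriv g z := by
    filter_upwards [Filter.EventuallyEq.deriv hfg, htev] with z h1 h2
    rw [h1, D1' g k z (hgt z h2).differentiableAt]
  -- second derivative
  have hf2 : ∀ᶠ z in 𝓝 (0 : ℂ), deriv (deriv f) z
      = ((k : ℂ) + 3) * ((k : ℂ) + 2) * z ^ (k + 1) * g z
        + (2 * ((k : ℂ) + 3)) * z ^ (k + 2) * deriv g z
        + z ^ (k + 3) * deriv (deriv g) z := by
    filter_upwards [Filter.EventuallyEq.deriv hf1, htev] with z h1 h2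
    rw [h1, D2' g (deriv g) ((k : ℂ) + 3) k z (hgt z h2).differentiableAt
      (hg1t z h2).differentiableAt]
    ring
  -- third derivative
  have hf3 : ∀ᶠ z in 𝓝 (0 : ℂ), deriv (deriv (deriv f)) z
      = ((((k : ℂ) + 3) * ((k : ℂ) + 2) * ((k : ℂ) + 1) * z ^ k * g z
          + ((k : ℂ) + 3) * ((k : ℂ) + 2) * z ^ (k + 1) * deriv g z)
        + ((2 * ((k : ℂ) + 3)) * ((k : ℂ) + 2) * z ^ (k + 1) * deriv g z
          + (2 * ((k : ℂ) + 3)) * z ^ (k + 2) * deriv (deriv g) z))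
        + (((k : ℂ) + 3) * z ^ (k + 2) * deriv (deriv g) z
          + z ^ (k + 3) * deriv (deriv (deriv g)) z) := by
    filter_upwards [Filter.EventuallyEq.deriv hf2, htev] with z h1 h2
    rw [h1, D3' g (deriv g) (deriv (deriv g)) (((k : ℂ) + 3) * ((k : ℂ) + 2))
      (2 * ((k : ℂ) + 3)) k z (hgt z h2).differentiableAt (hg1t z h2).differentiableAt
      (hg2t z h2).differentiableAt]
  -- the bracket function H
  set n : ℂ := (k : ℂ) + 3 with hn
  set H : ℂ → ℂ := fun z =>
    g z ^ 3 * (n * (n - 1) * (n - 2) * g z + 3 * n * (n - 1) * z * deriv g z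
      + 3 * n * z ^ 2 * deriv (deriv g) z + z ^ 3 * deriv (deriv (deriv g)) z)
    - 3 * g z ^ 2 * (n * g z + z * deriv g z)
      * (n * (n - 1) * g z + 2 * n * z * deriv g z + z ^ 2 * deriv (deriv g) z)
    + 2 * g z * (n * g z + z * deriv g z) ^ 3 with hH
  have i2 : iteratedDeriv 2 f = deriv (deriv f) := by
    simp [iteratedDeriv_succ, iteratedDeriv_one]
  have i3 : iteratedDeriv 3 f = deriv (deriv (deriv f)) := by
    simp [iteratedDeriv_succ, iteratedDeriv_one]
  have key : ∀ᶠ z in 𝓝 (0 : ℂ), (z ^ k) ^ 4 * z ^ 9 * H z = 0 := by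
    filter_upwards [hfg, hf1, hf2, hf3] with z e0 e1 e2 e3
    have e := hE z
    rw [i2, i3, e0, e1, e2, e3] at e
    rw [hH]
    linear_combination e
  -- H vanishes on the punctured neighborhood
  have hkey : ∀ᶠ z in 𝓝[≠] (0 : ℂ), H z = 0 := by
    rw [eventually_nhdsWithin_iff]
    filter_upwards [key] with z h1 hz
    have hzk : (z ^ k) ^ 4 * z ^ 9 ≠ 0 :=
      mul_ne_zero (pow_ne_zero _ (pow_ne_zero _ hz)) (pow_ne_zero _ hz)
    exact (mul_eq_zero.mp h1).resolve_left hzk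
  -- but H is continuous at 0 with H 0 = 2 n (g 0)^4 ≠ 0
  have hcH : ContinuousAt H 0 := by
    rw [hH]
    have c0 : ContinuousAt g 0 := (hgt 0 ht0).continuousAt
    have c1 : ContinuousAt (deriv g) 0 := (hg1t 0 ht0).continuousAt
    have c2 : ContinuousAt (deriv (deriv g)) 0 := (hg2t 0 ht0).continuousAt
    have c3 : ContinuousAt (deriv (deriv (deriv g))) 0 := (hg3t 0 ht0).continuousAt
    fun_prop
  have hH0 : H 0 = 0 := by
    have t1 : Filter.Tendsto H (𝓝[≠] 0) (𝓝 (H 0)) :=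
      hcH.continuousWithinAt.tendsto
    have t2 : Filter.Tendsto H (𝓝[≠] 0) (𝓝 0) := by
      apply Filter.Tendsto.congr' _ tendsto_const_nhds
      filter_upwards [hkey] with z hz using hz.symm
    exact tendsto_nhds_unique t1 t2
  have hval : 2 * n * g 0 ^ 4 = 0 := by
    rw [hH] at hH0
    simp only at hH0
    linear_combination hH0
  have hnne : n ≠ 0 := by
    rw [hn]
    intro h
    have : ((k : ℂ) + 3) = ((k + 3 : ℕ) : ℂ) := by push_cast; ring
    rw [this] at h
    exact (Nat.cast_ne_zero.mpr (by omega : k + 3 ≠ 0)) h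
  exact (mul_ne_zero (mul_ne_zero two_ne_zero hnne) (pow_ne_zero 4 hg0)) hval
end

section
/- The function f(z) = z·e^{αz²} (for any α ∈ ℂ) satisfies the differential equation (f'(0))³ f(2z) = f(z)³f'''(z) - 3f(z)²f'(z)f''(z) + 2f(z)f'(z)³ for all z ∈ ℂ. -/
open Complex

private lemma hd1 (α z : ℂ) :
    HasDerivAt (fun u : ℂ => u * exp (α * u ^ 2))
      ((1 + 2 * α * z ^ 2) * exp (α * z ^ 2)) z := by
  have h1 : HasDerivAt (fun u : ℂ => α * u ^ 2) (α * (2 * z)) z := by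
    simpa using ((hasDerivAt_pow 2 z).const_mul α)
  have h2 : HasDerivAt (fun u : ℂ => exp (α * u ^ 2))
      (exp (α * z ^ 2) * (α * (2 * z))) z := h1.cexp
  have := (hasDerivAt_id z).fun_mul h2
  simp only [id] at this
  exact this.congr_deriv (by ring)

private lemma deriv1 (α : ℂ) :
    deriv (fun u : ℂ => u * exp (α * u ^ 2)) =
      fun z => (1 + 2 * α * z ^ 2) * exp (α * z ^ 2) := by
  funext z; exact (hd1 α z).deriv

private lemma hd2 (α z : ℂ) :
    HasDerivAt (fun u : ℂ => (1 + 2 * α * u ^ 2) * exp (α * u ^ 2))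
      ((6 * α * z + 4 * α ^ 2 * z ^ 3) * exp (α * z ^ 2)) z := by
  have h1 : HasDerivAt (fun u : ℂ => α * u ^ 2) (α * (2 * z)) z := by
    simpa using ((hasDerivAt_pow 2 z).const_mul α)
  have h2 : HasDerivAt (fun u : ℂ => exp (α * u ^ 2))
      (exp (α * z ^ 2) * (α * (2 * z))) z := h1.cexp
  have h3 : HasDerivAt (fun u : ℂ => 1 + 2 * α * u ^ 2) (2 * α * (2 * z)) z := by
    simpa using (((hasDerivAt_pow 2 z).const_mul (2 * α)).const_add 1)
  have := h3.fun_mul h2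
  exact this.congr_deriv (by ring)

private lemma deriv2 (α : ℂ) :
    iteratedDeriv 2 (fun u : ℂ => u * exp (α * u ^ 2)) =
      fun z => (6 * α * z + 4 * α ^ 2 * z ^ 3) * exp (α * z ^ 2) := by
  funext z
  rw [iteratedDeriv_succ, iteratedDeriv_one, deriv1]
  exact (hd2 α z).deriv

private lemma deriv3 (α z : ℂ) :
    iteratedDeriv 3 (fun u : ℂ => u * exp (α * u ^ 2)) z =
      (6 * α + 24 * α ^ 2 * z ^ 2 + 8 * α ^ 3 * z ^ 4) * exp (α * z ^ 2) := by
  rw [iteratedDeriv_succ, deriv2]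
  have h1 : HasDerivAt (fun u : ℂ => α * u ^ 2) (α * (2 * z)) z := by
    simpa using ((hasDerivAt_pow 2 z).const_mul α)
  have h2 : HasDerivAt (fun u : ℂ => exp (α * u ^ 2))
      (exp (α * z ^ 2) * (α * (2 * z))) z := h1.cexp
  have h3 : HasDerivAt (fun u : ℂ => 6 * α * u + 4 * α ^ 2 * u ^ 3)
      (6 * α + 4 * α ^ 2 * (3 * z ^ 2)) z := by
    have := ((hasDerivAt_id z).const_mul (6 * α)).fun_add
      ((hasDerivAt_pow 3 z).const_mul (4 * α ^ 2))
    simpa using this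
  have := h3.fun_mul h2
  apply HasDerivAt.deriv
  exact this.congr_deriv (by ring)

theorem stmt_14 (α : ℂ) :
    ∀ z : ℂ,
      (deriv (fun u => u * exp (α * u ^ 2)) 0) ^ 3 * (2 * z * exp (α * (2 * z) ^ 2)) =
        (z * exp (α * z ^ 2)) ^ 3 * iteratedDeriv 3 (fun u => u * exp (α * u ^ 2)) z -
          3 * (z * exp (α * z ^ 2)) ^ 2 * deriv (fun u => u * exp (α * u ^ 2)) z *
            iteratedDeriv 2 (fun u => u * exp (α * u ^ 2)) z +
          2 * (z * exp (α * z ^ 2)) * (deriv (fun u => u * exp (α * u ^ 2)) z) ^ 3 := by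
  intro z
  rw [deriv1, deriv2, deriv3]
  have hE : exp (α * (2 * z) ^ 2) = exp (α * z ^ 2) ^ 4 := by
    rw [← Complex.exp_nat_mul]
    ring_nf
  simp only [hE]
  norm_num [Complex.exp_zero]
  ring
end

section
/- The function f(z) = sin(az)·e^{αz² + β} (for any a, α, β ∈ ℂ) satisfies the sigma-function identity for all x, y, z, w ∈ ℂ. -/
open Complex

set_option maxHeartbeats 2000000 in
lemma sin_key (x y z w : ℂ) :
    sin (x+x) * sin (y+y) * sin (z+z) * sin (w+w) -
    sin (x+y+z-w) * sin (x+y-z+w) * sin (x-y+z+w) * sin (-x+y+z+w) -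
    sin (x+y+z+w) * sin (x+y-z-w) * sin (x-y+z-w) * sin (x-y-z+w) = 0 := by
  have rX : exp (x*I) * exp (-x*I) = 1 := by rw [← Complex.exp_add]; simp
  have rY : exp (y*I) * exp (-y*I) = 1 := by rw [← Complex.exp_add]; simp
  have rZ : exp (z*I) * exp (-z*I) = 1 := by rw [← Complex.exp_add]; simp
  have rW : exp (w*I) * exp (-w*I) = 1 := by rw [← Complex.exp_add]; simp
  have h1 : exp ((x+x)*I) = exp (x*I)*exp (x*I) := by
    rw [← Complex.exp_add]; congr 1; ring
  have h2 : exp (-(x+x)*I) = exp (-x*I)*exp (-x*I) := by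
    rw [← Complex.exp_add]; congr 1; ring
  have h3 : exp ((y+y)*I) = exp (y*I)*exp (y*I) := by
    rw [← Complex.exp_add]; congr 1; ring
  have h4 : exp (-(y+y)*I) = exp (-y*I)*exp (-y*I) := by
    rw [← Complex.exp_add]; congr 1; ring
  have h5 : exp ((z+z)*I) = exp (z*I)*exp (z*I) := by
    rw [← Complex.exp_add]; congr 1; ring
  have h6 : exp (-(z+z)*I) = exp (-z*I)*exp (-z*I) := by
    rw [← Complex.exp_add]; congr 1; ring
  have h7 : exp ((w+w)*I) = exp (w*I)*exp (w*I) := by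
    rw [← Complex.exp_add]; congr 1; ring
  have h8 : exp (-(w+w)*I) = exp (-w*I)*exp (-w*I) := by
    rw [← Complex.exp_add]; congr 1; ring
  have h9 : exp ((x+y+z-w)*I) = exp (x*I)*exp (y*I)*exp (z*I)*exp (-w*I) := by
    rw [← Complex.exp_add, ← Complex.exp_add, ← Complex.exp_add]; congr 1; ring
  have h10 : exp (-(x+y+z-w)*I) = exp (-x*I)*exp (-y*I)*exp (-z*I)*exp (w*I) := by
    rw [← Complex.exp_add, ← Complex.exp_add, ← Complex.exp_add]; congr 1; ring
  have h11 : exp ((x+y-z+w)*I) = exp (x*I)*exp (y*I)*exp (-z*I)*exp (w*I) := by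
    rw [← Complex.exp_add, ← Complex.exp_add, ← Complex.exp_add]; congr 1; ring
  have h12 : exp (-(x+y-z+w)*I) = exp (-x*I)*exp (-y*I)*exp (z*I)*exp (-w*I) := by
    rw [← Complex.exp_add, ← Complex.exp_add, ← Complex.exp_add]; congr 1; ring
  have h13 : exp ((x-y+z+w)*I) = exp (x*I)*exp (-y*I)*exp (z*I)*exp (w*I) := by
    rw [← Complex.exp_add, ← Complex.exp_add, ← Complex.exp_add]; congr 1; ring
  have h14 : exp (-(x-y+z+w)*I) = exp (-x*I)*exp (y*I)*exp (-z*I)*exp (-w*I) := by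
    rw [← Complex.exp_add, ← Complex.exp_add, ← Complex.exp_add]; congr 1; ring
  have h15 : exp ((-x+y+z+w)*I) = exp (-x*I)*exp (y*I)*exp (z*I)*exp (w*I) := by
    rw [← Complex.exp_add, ← Complex.exp_add, ← Complex.exp_add]; congr 1; ring
  have h16 : exp (-(-x+y+z+w)*I) = exp (x*I)*exp (-y*I)*exp (-z*I)*exp (-w*I) := by
    rw [← Complex.exp_add, ← Complex.exp_add, ← Complex.exp_add]; congr 1; ring
  have h17 : exp ((x+y+z+w)*I) = exp (x*I)*exp (y*I)*exp (z*I)*exp (w*I) := by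
    rw [← Complex.exp_add, ← Complex.exp_add, ← Complex.exp_add]; congr 1; ring
  have h18 : exp (-(x+y+z+w)*I) = exp (-x*I)*exp (-y*I)*exp (-z*I)*exp (-w*I) := by
    rw [← Complex.exp_add, ← Complex.exp_add, ← Complex.exp_add]; congr 1; ring
  have h19 : exp ((x+y-z-w)*I) = exp (x*I)*exp (y*I)*exp (-z*I)*exp (-w*I) := by
    rw [← Complex.exp_add, ← Complex.exp_add, ← Complex.exp_add]; congr 1; ring
  have h20 : exp (-(x+y-z-w)*I) = exp (-x*I)*exp (-y*I)*exp (z*I)*exp (w*I) := by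
    rw [← Complex.exp_add, ← Complex.exp_add, ← Complex.exp_add]; congr 1; ring
  have h21 : exp ((x-y+z-w)*I) = exp (x*I)*exp (-y*I)*exp (z*I)*exp (-w*I) := by
    rw [← Complex.exp_add, ← Complex.exp_add, ← Complex.exp_add]; congr 1; ring
  have h22 : exp (-(x-y+z-w)*I) = exp (-x*I)*exp (y*I)*exp (-z*I)*exp (w*I) := by
    rw [← Complex.exp_add, ← Complex.exp_add, ← Complex.exp_add]; congr 1; ring
  have h23 : exp ((x-y-z+w)*I) = exp (x*I)*exp (-y*I)*exp (-z*I)*exp (w*I) := by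
    rw [← Complex.exp_add, ← Complex.exp_add, ← Complex.exp_add]; congr 1; ring
  have h24 : exp (-(x-y-z+w)*I) = exp (-x*I)*exp (y*I)*exp (z*I)*exp (-w*I) := by
    rw [← Complex.exp_add, ← Complex.exp_add, ← Complex.exp_add]; congr 1; ring
  simp only [Complex.sin, h1, h2, h3, h4, h5, h6, h7, h8, h9, h10, h11, h12, h13, h14, h15, h16, h17, h18, h19, h20, h21, h22, h23, h24]
  linear_combination (I^4/16) * (((-1))*(exp (y*I))*(exp (z*I))*(exp (w*I))*(exp (-x*I))^2*(exp (-y*I))^3*(exp (-z*I))^3*(exp (-w*I))^3 + (exp (y*I))*(exp (z*I))*(exp (w*I))^3*(exp (-x*I))^2*(exp (-y*I))^3*(exp (-z*I))^3*(exp (-w*I)) + (exp (y*I))*(exp (z*I))^3*(exp (w*I))*(exp (-x*I))^2*(exp (-y*I))^3*(exp (-z*I))*(exp (-w*I))^3 + ((-1))*(exp (y*I))*(exp (z*I))^3*(exp (w*I))^3*(exp (-x*I))^2*(exp (-y*I))^3*(exp (-z*I))*(exp (-w*I)) + (exp (y*I))^3*(exp (z*I))*(exp (w*I))*(exp (-x*I))^2*(exp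 (-y*I))*(exp (-z*I))^3*(exp (-w*I))^3 + ((-1))*(exp (y*I))^3*(exp (z*I))*(exp (w*I))^3*(exp (-x*I))^2*(exp (-y*I))*(exp (-z*I))^3*(exp (-w*I)) + ((-1))*(exp (y*I))^3*(exp (z*I))^3*(exp (w*I))*(exp (-x*I))^2*(exp (-y*I))*(exp (-z*I))*(exp (-w*I))^3 + (exp (y*I))^3*(exp (z*I))^3*(exp (w*I))^3*(exp (-x*I))^2*(exp (-y*I))*(exp (-z*I))*(exp (-w*I)) + (exp (x*I))^2*(exp (y*I))*(exp (z*I))*(exp (w*I))*(exp (-y*I))^3*(exp (-z*I))^3*(exp (-w*I))^3 + ((-1))*(exp (x*I))^2*(exp (y*I))*(exp (z*I))*(exp (w*I))^3*(exp (-y*I))^3*(exp (-z*I))^3*(exp (-w*I)) + ((-1))*(exp (x*I))^2*(exp (y*I))*(exp (z*I))^3*(exp (w*I))*(exp (-y*I))^3*(exp (-z*I))*(exp (-w*I))^3 + (exp (x*I))^2*(exp (y*I))*(exp (z*I))^3*(exp (w*I))^3*(exp (-y*I))^3*(exp (-z*I))*(exp (-w*I)) + ((-1))*(exp (x*I))^2*(exp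 (y*I))^3*(exp (z*I))*(exp (w*I))*(exp (-y*I))*(exp (-z*I))^3*(exp (-w*I))^3 + (exp (x*I))^2*(exp (y*I))^3*(exp (z*I))*(exp (w*I))^3*(exp (-y*I))*(exp (-z*I))^3*(exp (-w*I)) + (exp (x*I))^2*(exp (y*I))^3*(exp (z*I))^3*(exp (w*I))*(exp (-y*I))*(exp (-z*I))*(exp (-w*I))^3 + ((-1))*(exp (x*I))^2*(exp (y*I))^3*(exp (z*I))^3*(exp (w*I))^3*(exp (-y*I))*(exp (-z*I))*(exp (-w*I))) * rX + (I^4/16) * (((-1))*(exp (z*I))*(exp (w*I))*(exp (-x*I))^2*(exp (-y*I))^2*(exp (-z*I))^3*(exp (-w*I))^3 + (exp (z*I))*(exp (w*I))^3*(exp (-x*I))^2*(exp (-y*I))^2*(exp (-z*I))^3*(exp (-w*I)) + (exp (z*I))^3*(exp (w*I))*(exp (-x*I))^2*(exp (-y*I))^2*(exp (-z*I))*(exp (-w*I))^3 + ((-1))*(exp (z*I))^3*(exp (w*I))^3*(exp (-x*I))^2*(exp (-y*I))^2*(exp (-z*I))*(exp (-w*I)) + (exp (y*I))^2*(exp (z*I))*(exp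 (w*I))*(exp (-x*I))^2*(exp (-z*I))^3*(exp (-w*I))^3 + ((-1))*(exp (y*I))^2*(exp (z*I))*(exp (w*I))^3*(exp (-x*I))^2*(exp (-z*I))^3*(exp (-w*I)) + ((-1))*(exp (y*I))^2*(exp (z*I))^3*(exp (w*I))*(exp (-x*I))^2*(exp (-z*I))*(exp (-w*I))^3 + (exp (y*I))^2*(exp (z*I))^3*(exp (w*I))^3*(exp (-x*I))^2*(exp (-z*I))*(exp (-w*I)) + (exp (x*I))^2*(exp (z*I))*(exp (w*I))*(exp (-y*I))^2*(exp (-z*I))^3*(exp (-w*I))^3 + ((-1))*(exp (x*I))^2*(exp (z*I))*(exp (w*I))^3*(exp (-y*I))^2*(exp (-z*I))^3*(exp (-w*I)) + ((-1))*(exp (x*I))^2*(exp (z*I))^3*(exp (w*I))*(exp (-y*I))^2*(exp (-z*I))*(exp (-w*I))^3 + (exp (x*I))^2*(exp (z*I))^3*(exp (w*I))^3*(exp (-y*I))^2*(exp (-z*I))*(exp (-w*I)) + ((-1))*(exp (x*I))^2*(exp (y*I))^2*(exp (z*I))*(exp (w*I))*(exp (-z*I))^3*(exp (-w*I))^3 +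 (exp (x*I))^2*(exp (y*I))^2*(exp (z*I))*(exp (w*I))^3*(exp (-z*I))^3*(exp (-w*I)) + (exp (x*I))^2*(exp (y*I))^2*(exp (z*I))^3*(exp (w*I))*(exp (-z*I))*(exp (-w*I))^3 + ((-1))*(exp (x*I))^2*(exp (y*I))^2*(exp (z*I))^3*(exp (w*I))^3*(exp (-z*I))*(exp (-w*I))) * rY + (I^4/16) * (((-1))*(exp (w*I))*(exp (-x*I))^2*(exp (-y*I))^2*(exp (-z*I))^2*(exp (-w*I))^3 + (exp (w*I))^3*(exp (-x*I))^2*(exp (-y*I))^2*(exp (-z*I))^2*(exp (-w*I)) + (exp (z*I))^2*(exp (w*I))*(exp (-x*I))^2*(exp (-y*I))^2*(exp (-w*I))^3 + ((-1))*(exp (z*I))^2*(exp (w*I))^3*(exp (-x*I))^2*(exp (-y*I))^2*(exp (-w*I)) + (exp (y*I))^2*(exp (w*I))*(exp (-x*I))^2*(exp (-z*I))^2*(exp (-w*I))^3 + ((-1))*(exp (y*I))^2*(exp (w*I))^3*(exp (-x*I))^2*(exp (-z*I))^2*(exp (-w*I)) + ((-1))*(exp (y*I))^2*(exp (z*I))^2*(exp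 (w*I))*(exp (-x*I))^2*(exp (-w*I))^3 + (exp (y*I))^2*(exp (z*I))^2*(exp (w*I))^3*(exp (-x*I))^2*(exp (-w*I)) + (exp (x*I))^2*(exp (w*I))*(exp (-y*I))^2*(exp (-z*I))^2*(exp (-w*I))^3 + ((-1))*(exp (x*I))^2*(exp (w*I))^3*(exp (-y*I))^2*(exp (-z*I))^2*(exp (-w*I)) + ((-1))*(exp (x*I))^2*(exp (z*I))^2*(exp (w*I))*(exp (-y*I))^2*(exp (-w*I))^3 + (exp (x*I))^2*(exp (z*I))^2*(exp (w*I))^3*(exp (-y*I))^2*(exp (-w*I)) + ((-1))*(exp (x*I))^2*(exp (y*I))^2*(exp (w*I))*(exp (-z*I))^2*(exp (-w*I))^3 + (exp (x*I))^2*(exp (y*I))^2*(exp (w*I))^3*(exp (-z*I))^2*(exp (-w*I)) + (exp (x*I))^2*(exp (y*I))^2*(exp (z*I))^2*(exp (w*I))*(exp (-w*I))^3 + ((-1))*(exp (x*I))^2*(exp (y*I))^2*(exp (z*I))^2*(exp (w*I))^3*(exp (-w*I))) * rZ + (I^4/16) * (((-1))*(exp (-x*I))^2*(exp (-y*I))^2*(exp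 (-z*I))^2*(exp (-w*I))^2 + (exp (w*I))^2*(exp (-x*I))^2*(exp (-y*I))^2*(exp (-z*I))^2 + (exp (z*I))^2*(exp (-x*I))^2*(exp (-y*I))^2*(exp (-w*I))^2 + ((-1))*(exp (z*I))^2*(exp (w*I))^2*(exp (-x*I))^2*(exp (-y*I))^2 + (exp (y*I))^2*(exp (-x*I))^2*(exp (-z*I))^2*(exp (-w*I))^2 + ((-1))*(exp (y*I))^2*(exp (w*I))^2*(exp (-x*I))^2*(exp (-z*I))^2 + ((-1))*(exp (y*I))^2*(exp (z*I))^2*(exp (-x*I))^2*(exp (-w*I))^2 + (exp (y*I))^2*(exp (z*I))^2*(exp (w*I))^2*(exp (-x*I))^2 + (exp (x*I))^2*(exp (-y*I))^2*(exp (-z*I))^2*(exp (-w*I))^2 + ((-1))*(exp (x*I))^2*(exp (w*I))^2*(exp (-y*I))^2*(exp (-z*I))^2 + ((-1))*(exp (x*I))^2*(exp (z*I))^2*(exp (-y*I))^2*(exp (-w*I))^2 + (exp (x*I))^2*(exp (z*I))^2*(exp (w*I))^2*(exp (-y*I))^2 + ((-1))*(exp (x*I))^2*(exp (y*I))^2*(exp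 (-z*I))^2*(exp (-w*I))^2 + (exp (x*I))^2*(exp (y*I))^2*(exp (w*I))^2*(exp (-z*I))^2 + (exp (x*I))^2*(exp (y*I))^2*(exp (z*I))^2*(exp (-w*I))^2 + ((-1))*(exp (x*I))^2*(exp (y*I))^2*(exp (z*I))^2*(exp (w*I))^2) * rW

set_option maxHeartbeats 1000000 in
theorem stmt_16 (a α β : ℂ) :
    ∀ x y z w : ℂ,
      (fun u => sin (a * u) * exp (α * u ^ 2 + β)) x *
        (fun u => sin (a * u) * exp (α * u ^ 2 + β)) y *
        (fun u => sin (a * u) * exp (α * u ^ 2 + β)) z *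
        (fun u => sin (a * u) * exp (α * u ^ 2 + β)) w -
      (fun u => sin (a * u) * exp (α * u ^ 2 + β)) ((x+y+z-w)/2) *
        (fun u => sin (a * u) * exp (α * u ^ 2 + β)) ((x+y-z+w)/2) *
        (fun u => sin (a * u) * exp (α * u ^ 2 + β)) ((x-y+z+w)/2) *
        (fun u => sin (a * u) * exp (α * u ^ 2 + β)) ((-x+y+z+w)/2) -
      (fun u => sin (a * u) * exp (α * u ^ 2 + β)) ((x+y+z+w)/2) *
        (fun u => sin (a * u) * exp (α * u ^ 2 + β)) ((x+y-z-w)/2) *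
        (fun u => sin (a * u) * exp (α * u ^ 2 + β)) ((x-y+z-w)/2) *
        (fun u => sin (a * u) * exp (α * u ^ 2 + β)) ((x-y-z+w)/2) = 0 := by
  intro x y z w
  simp only []
  have hE : ∀ p q r s : ℂ, p^2+q^2+r^2+s^2 = x^2+y^2+z^2+w^2 →
      exp (α*p^2+β) * exp (α*q^2+β) * exp (α*r^2+β) * exp (α*s^2+β)
        = exp (α*(x^2+y^2+z^2+w^2) + 4*β) := by
    intro p q r s h
    rw [← Complex.exp_add, ← Complex.exp_add, ← Complex.exp_add]
    congr 1
    rw [show α*p^2+β+(α*q^2+β)+(α*r^2+β)+(α*s^2+β) = α*(p^2+q^2+r^2+s^2)+4*β from by ring, h]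
  have h1 : exp (α*x^2+β) * exp (α*y^2+β) * exp (α*z^2+β) * exp (α*w^2+β)
      = exp (α*(x^2+y^2+z^2+w^2) + 4*β) := hE x y z w (by ring)
  have h2 : exp (α*((x+y+z-w)/2)^2+β) * exp (α*((x+y-z+w)/2)^2+β) *
      exp (α*((x-y+z+w)/2)^2+β) * exp (α*((-x+y+z+w)/2)^2+β)
      = exp (α*(x^2+y^2+z^2+w^2) + 4*β) := hE _ _ _ _ (by ring)
  have h3 : exp (α*((x+y+z+w)/2)^2+β) * exp (α*((x+y-z-w)/2)^2+β) *
      exp (α*((x-y+z-w)/2)^2+β) * exp (α*((x-y-z+w)/2)^2+β)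
      = exp (α*(x^2+y^2+z^2+w^2) + 4*β) := hE _ _ _ _ (by ring)
  have hkey := sin_key (a*x/2) (a*y/2) (a*z/2) (a*w/2)
  rw [show sin (a*x) = sin (a*x/2 + a*x/2) from congrArg sin (by ring)]
  rw [show sin (a*y) = sin (a*y/2 + a*y/2) from congrArg sin (by ring)]
  rw [show sin (a*z) = sin (a*z/2 + a*z/2) from congrArg sin (by ring)]
  rw [show sin (a*w) = sin (a*w/2 + a*w/2) from congrArg sin (by ring)]
  rw [show sin (a*((x+y+z-w)/2)) = sin (a*x/2 + a*y/2 + a*z/2 - a*w/2) from congrArg sin (by ring)]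
  rw [show sin (a*((x+y-z+w)/2)) = sin (a*x/2 + a*y/2 - a*z/2 + a*w/2) from congrArg sin (by ring)]
  rw [show sin (a*((x-y+z+w)/2)) = sin (a*x/2 - a*y/2 + a*z/2 + a*w/2) from congrArg sin (by ring)]
  rw [show sin (a*((-x+y+z+w)/2)) = sin (-(a*x/2) + a*y/2 + a*z/2 + a*w/2) from congrArg sin (by ring)]
  rw [show sin (a*((x+y+z+w)/2)) = sin (a*x/2 + a*y/2 + a*z/2 + a*w/2) from congrArg sin (by ring)]
  rw [show sin (a*((x+y-z-w)/2)) = sin (a*x/2 + a*y/2 - a*z/2 - a*w/2) from congrArg sin (by ring)]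
  rw [show sin (a*((x-y+z-w)/2)) = sin (a*x/2 - a*y/2 + a*z/2 - a*w/2) from congrArg sin (by ring)]
  rw [show sin (a*((x-y-z+w)/2)) = sin (a*x/2 - a*y/2 - a*z/2 + a*w/2) from congrArg sin (by ring)]
  linear_combination
    (sin (a*x/2 + a*x/2) * sin (a*y/2 + a*y/2) * sin (a*z/2 + a*z/2) * sin (a*w/2 + a*w/2)) * h1
    - (sin (a*x/2 + a*y/2 + a*z/2 - a*w/2) * sin (a*x/2 + a*y/2 - a*z/2 + a*w/2) *
        sin (a*x/2 - a*y/2 + a*z/2 + a*w/2) * sin (-(a*x/2) + a*y/2 + a*z/2 + a*w/2)) * h2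
    - (sin (a*x/2 + a*y/2 + a*z/2 + a*w/2) * sin (a*x/2 + a*y/2 - a*z/2 - a*w/2) *
        sin (a*x/2 - a*y/2 + a*z/2 - a*w/2) * sin (a*x/2 - a*y/2 - a*z/2 + a*w/2)) * h3
    + exp (α*(x^2+y^2+z^2+w^2) + 4*β) * hkey
end

section
/- If f₁ and f₂ are odd entire functions with f₁'(0) = f₂'(0) = 1, both satisfying (f'(0))³f(2z) = f(z)³f'''(z) - 3f(z)²f'(z)f''(z) + 2f(z)f'(z)³ for all z ∈ ℂ, and their Taylor expansions at 0 agree up to order 8 (i.e. f₁ - f₂ vanishes to order at least 9 at 0), then f₁ = f₂ identically. -/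
open Finset

namespace S18


lemma diff_itd {f : ℂ → ℂ} (hf : Differentiable ℂ f) (n : ℕ) :
    Differentiable ℂ (iteratedDeriv n f) := by
  rw [iteratedDeriv_eq_iterate]
  exact (hf.contDiff.iterate_deriv n).differentiable (by simp)

lemma itd_itd {f : ℂ → ℂ} (m c : ℕ) :
    iteratedDeriv m (iteratedDeriv c f) = iteratedDeriv (m + c) f := by
  simp only [iteratedDeriv_eq_iterate]
  exact (Function.iterate_add_apply deriv m c f).symm

theorem leibniz {f g : ℂ → ℂ} (hf : Differentiable ℂ f) (hg : Differentiable ℂ g) (n : ℕ) :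
    iteratedDeriv n (fun z => f z * g z) =
      fun x => ∑ k ∈ range (n + 1),
        (n.choose k : ℂ) * iteratedDeriv k f x * iteratedDeriv (n - k) g x := by
  induction n with
  | zero => simp
  | succ n ih =>
    rw [iteratedDeriv_succ, ih]
    funext x
    rw [deriv_fun_sum (fun k hk => by
      exact (((diff_itd hf k).differentiableAt.const_mul _).fun_mul
        (diff_itd hg (n - k)).differentiableAt))]
    have hterm : ∀ k ∈ range (n + 1),
        deriv (fun x => (n.choose k : ℂ) * iteratedDeriv k f x * iteratedDeriv (n - k) g x) x =
          (n.choose k : ℂ) * iteratedDeriv (k+1) f x * iteratedDeriv (n - k) g x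
          + (n.choose k : ℂ) * iteratedDeriv k f x * iteratedDeriv (n - k + 1) g x := by
      intro k hk
      have h1 : deriv (fun x => (n.choose k : ℂ) * iteratedDeriv k f x * iteratedDeriv (n - k) g x) x
          = (n.choose k : ℂ) * (deriv (iteratedDeriv k f) x * iteratedDeriv (n - k) g x
            + iteratedDeriv k f x * deriv (iteratedDeriv (n-k) g) x) := by
        rw [show (fun x => (n.choose k : ℂ) * iteratedDeriv k f x * iteratedDeriv (n - k) g x)
            = fun x => (n.choose k : ℂ) * (iteratedDeriv k f x * iteratedDeriv (n - k) g x) by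
          funext y; ring]
        rw [deriv_const_mul _ ((diff_itd hf k).differentiableAt.fun_mul
          (diff_itd hg (n-k)).differentiableAt),
          deriv_fun_mul (diff_itd hf k).differentiableAt (diff_itd hg (n-k)).differentiableAt]
      rw [h1, ← iteratedDeriv_succ, ← iteratedDeriv_succ]
      ring
    rw [Finset.sum_congr rfl hterm, Finset.sum_add_distrib]
    have e2 : ∑ k ∈ range (n + 1),
        (n.choose k : ℂ) * iteratedDeriv k f x * iteratedDeriv (n - k + 1) g x
        = (∑ k ∈ range (n + 1),
            (n.choose (k+1) : ℂ) * iteratedDeriv (k+1) f x * iteratedDeriv (n - k) g x)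
          + iteratedDeriv 0 f x * iteratedDeriv (n+1) g x := by
      rw [Finset.sum_range_succ']
      congr 1
      · rw [Finset.sum_range_succ]
        have hz : (n.choose (n+1) : ℂ) = 0 := by
          simp [Nat.choose_eq_zero_of_lt]
        rw [hz]
        simp only [zero_mul, add_zero]
        refine Finset.sum_congr rfl fun k hk => ?_
        have : n - (k + 1) + 1 = n - k := by
          have := Finset.mem_range.mp hk; omega
        rw [this]
      · simp
    rw [e2, show iteratedDeriv 0 f x = f x from rfl]
    rw [Finset.sum_range_succ' (fun k => ((n+1).choose k : ℂ)
      * iteratedDeriv k f x * iteratedDeriv (n + 1 - k) g x) (n+1)]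
    have e3 : ∀ k ∈ range (n+1),
        (((n+1).choose (k+1) : ℂ) * iteratedDeriv (k+1) f x * iteratedDeriv (n + 1 - (k+1)) g x)
        = (n.choose k : ℂ) * iteratedDeriv (k+1) f x * iteratedDeriv (n - k) g x
          + (n.choose (k+1) : ℂ) * iteratedDeriv (k+1) f x * iteratedDeriv (n - k) g x := by
      intro k hk
      have h4 : n + 1 - (k+1) = n - k := by omega
      rw [h4, Nat.choose_succ_succ]
      push_cast
      ring
    rw [Finset.sum_congr rfl e3, Finset.sum_add_distrib]
    simp only [Nat.choose_zero_right, Nat.cast_one, one_mul, iteratedDeriv_zero, Nat.sub_zero]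
    ring


lemma itd_add {f g : ℂ → ℂ} (hf : Differentiable ℂ f) (hg : Differentiable ℂ g) (n : ℕ) (x : ℂ) :
    iteratedDeriv n (fun z => f z + g z) x = iteratedDeriv n f x + iteratedDeriv n g x := by
  rw [← iteratedDerivWithin_univ, ← iteratedDerivWithin_univ, ← iteratedDerivWithin_univ]
  exact iteratedDerivWithin_add (Set.mem_univ x) uniqueDiffOn_univ
    (hf.contDiff.contDiffAt.contDiffWithinAt) (hg.contDiff.contDiffAt.contDiffWithinAt)

lemma itd_sub {f g : ℂ → ℂ} (hf : Differentiable ℂ f) (hg : Differentiable ℂ g) (n : ℕ) (x : ℂ) :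
    iteratedDeriv n (fun z => f z - g z) x = iteratedDeriv n f x - iteratedDeriv n g x := by
  rw [← iteratedDerivWithin_univ, ← iteratedDerivWithin_univ, ← iteratedDerivWithin_univ]
  exact iteratedDerivWithin_sub (Set.mem_univ x) uniqueDiffOn_univ
    (hf.contDiff.contDiffAt.contDiffWithinAt) (hg.contDiff.contDiffAt.contDiffWithinAt)

lemma itd_cmul {f : ℂ → ℂ} (hf : Differentiable ℂ f) (c : ℂ) (n : ℕ) (x : ℂ) :
    iteratedDeriv n (fun z => c * f z) x = c * iteratedDeriv n f x := by
  rw [← iteratedDerivWithin_univ, ← iteratedDerivWithin_univ]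
  exact iteratedDerivWithin_const_mul (Set.mem_univ x) uniqueDiffOn_univ c
    (hf.contDiff.contDiffAt.contDiffWithinAt)

lemma itd_scale {f : ℂ → ℂ} (hf : Differentiable ℂ f) (n : ℕ) (x : ℂ) :
    iteratedDeriv n (fun z => f (2 * z)) x = 2 ^ n * iteratedDeriv n f (2 * x) :=
  congrFun (iteratedDeriv_comp_const_mul hf.contDiff 2) x


end S18

namespace S18X


noncomputable def P2 (a : ℕ → ℂ) (n : ℕ) : ℂ :=
  ∑ k ∈ range (n+1), (n.choose k : ℂ) * a k * a (n - k)
noncomputable def P3 (a : ℕ → ℂ) (n : ℕ) : ℂ :=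
  ∑ k ∈ range (n+1), (n.choose k : ℂ) * P2 a k * a (n - k)
noncomputable def Qq (a : ℕ → ℂ) (n : ℕ) : ℂ :=
  ∑ k ∈ range (n+1), (n.choose k : ℂ) * P2 a k * a (n - k + 1)
noncomputable def Rr (a : ℕ → ℂ) (n : ℕ) : ℂ :=
  ∑ k ∈ range (n+1), (n.choose k : ℂ) * a (k+1) * a (n - k + 1)
noncomputable def Ss (a : ℕ → ℂ) (n : ℕ) : ℂ :=
  ∑ k ∈ range (n+1), (n.choose k : ℂ) * Rr a k * a (n - k + 1)
noncomputable def T1 (a : ℕ → ℂ) (n : ℕ) : ℂ :=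
  ∑ k ∈ range (n+1), (n.choose k : ℂ) * P3 a k * a (n - k + 3)
noncomputable def T2 (a : ℕ → ℂ) (n : ℕ) : ℂ :=
  ∑ k ∈ range (n+1), (n.choose k : ℂ) * Qq a k * a (n - k + 2)
noncomputable def T3 (a : ℕ → ℂ) (n : ℕ) : ℂ :=
  ∑ k ∈ range (n+1), (n.choose k : ℂ) * a k * Ss a (n - k)

section values
variable {a : ℕ → ℂ} (ha0 : a 0 = 0) (ha1 : a 1 = 1)
include ha0

lemma P2_0 : P2 a 0 = 0 := by simp [P2, ha0]
lemma P2_1 : P2 a 1 = 0 := by simp [P2, Finset.sum_range_succ, ha0]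
include ha1 in
lemma P2_2 : P2 a 2 = 2 := by
  norm_num [P2, Finset.sum_range_succ, ha0, ha1, Nat.choose]
lemma P3_0 : P3 a 0 = 0 := by simp [P3, P2_0 ha0]
lemma P3_1 : P3 a 1 = 0 := by
  simp [P3, Finset.sum_range_succ, P2_0 ha0, P2_1 ha0, ha0]
lemma P3_2 : P3 a 2 = 0 := by
  simp [P3, Finset.sum_range_succ, P2_0 ha0, P2_1 ha0, ha0]
include ha1 in
lemma P3_3 : P3 a 3 = 6 := by
  norm_num [P3, Finset.sum_range_succ, P2_0 ha0, P2_1 ha0, P2_2 ha0 ha1, ha0, ha1, Nat.choose]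
lemma Q_0 : Qq a 0 = 0 := by simp [Qq, P2_0 ha0]
lemma Q_1 : Qq a 1 = 0 := by
  simp [Qq, Finset.sum_range_succ, P2_0 ha0, P2_1 ha0]
include ha1 in
lemma Q_2 : Qq a 2 = 2 := by
  norm_num [Qq, Finset.sum_range_succ, P2_0 ha0, P2_1 ha0, P2_2 ha0 ha1, ha1, Nat.choose]
omit ha0
include ha1 in
lemma R_0 : Rr a 0 = 1 := by simp [Rr, ha1]
include ha1 in
lemma S_0 : Ss a 0 = 1 := by simp [Ss, R_0 ha1, ha1]

end values

section diffs
variable {a b : ℕ → ℂ} {n : ℕ} (hn : 9 ≤ n)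
  (ha0 : a 0 = 0) (hb0 : b 0 = 0) (ha1 : a 1 = 1) (hb1 : b 1 = 1)
  (hlt : ∀ k, k < n → a k = b k)

include ha0 hb0 hlt in
lemma L1 : ∀ k, k ≤ n → P2 a k = P2 b k := by
  intro k hk
  refine Finset.sum_congr rfl fun j hj => ?_
  have hj' := Finset.mem_range.mp hj
  rcases eq_or_ne j 0 with rfl | hj0
  · rw [ha0, hb0]; ring
  rcases eq_or_ne j k with rfl | hjk
  · rw [Nat.sub_self, ha0, hb0]; ring
  · rw [hlt j (by omega), hlt (k-j) (by omega)]

include ha0 hb0 hlt in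
lemma L2 : ∀ k, k ≤ n → P3 a k = P3 b k := by
  intro k hk
  refine Finset.sum_congr rfl fun j hj => ?_
  have hj' := Finset.mem_range.mp hj
  rw [L1 ha0 hb0 hlt j (by omega)]
  by_cases h : k - j < n
  · rw [hlt _ h]
  · have hj0 : j = 0 ∧ k = n := by omega
    rw [hj0.1, P2_0 hb0]
    ring

include ha0 hb0 hlt in
lemma L3 : ∀ k, k ≤ n → Qq a k = Qq b k := by
  intro k hk
  refine Finset.sum_congr rfl fun j hj => ?_
  have hj' := Finset.mem_range.mp hj
  rw [L1 ha0 hb0 hlt j (by omega)]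
  by_cases h : k - j + 1 < n
  · rw [hlt _ h]
  · have hj01 : j = 0 ∨ j = 1 := by omega
    rcases hj01 with rfl | rfl
    · rw [P2_0 hb0]; ring
    · rw [P2_1 hb0]; ring

include hlt in
lemma L4 : ∀ k, k + 1 < n → Rr a k = Rr b k := by
  intro k hk
  refine Finset.sum_congr rfl fun i hi => ?_
  have hi' := Finset.mem_range.mp hi
  rw [hlt (i+1) (by omega), hlt (k-i+1) (by omega)]

include hn ha1 hb1 hlt in
lemma L5 : Rr a (n-1) = Rr b (n-1) + 2 * (a n - b n) := by
  have h1 : n - 1 + 1 = n := by omega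
  have key : ∀ i ∈ range n,
      ((n-1).choose i : ℂ) * a (i+1) * a (n-1-i+1)
        - ((n-1).choose i : ℂ) * b (i+1) * b (n-1-i+1)
      = (if i = 0 then a n - b n else 0) + (if i = n-1 then a n - b n else 0) := by
    intro i hi
    have hi' := Finset.mem_range.mp hi
    rcases eq_or_ne i 0 with rfl | hi0
    · have e : n - 1 - 0 + 1 = n := by omega
      rw [e, if_pos rfl, if_neg (by omega), ha1, hb1]
      simp
    rcases eq_or_ne i (n-1) with rfl | hin
    · have e : n - 1 - (n-1) + 1 = 1 := by omega
      rw [e, h1, if_neg hi0, if_pos rfl, ha1, hb1, Nat.choose_self]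
      push_cast; ring
    · have e1 : i + 1 < n := by omega
      have e2 : n - 1 - i + 1 < n := by omega
      rw [hlt _ e1, hlt _ e2, if_neg hi0, if_neg hin]
      ring
  have hsum := Finset.sum_congr rfl key
  rw [Finset.sum_sub_distrib, Finset.sum_add_distrib,
    Finset.sum_ite_eq' (range n) 0, Finset.sum_ite_eq' (range n) (n-1),
    if_pos (Finset.mem_range.mpr (by omega)), if_pos (Finset.mem_range.mpr (by omega))] at hsum
  unfold Rr
  rw [h1]
  linear_combination hsum

include hn hlt in
set_option linter.unusedSectionVars false in
lemma L6 : ∀ k, k + 1 < n → Ss a k = Ss b k := by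
  intro k hk
  refine Finset.sum_congr rfl fun j hj => ?_
  have hj' := Finset.mem_range.mp hj
  rw [L4 hlt j (by omega), hlt (k-j+1) (by omega)]

include hn ha1 hb1 hlt in
lemma L7 : Ss a (n-1) = Ss b (n-1) + 3 * (a n - b n) := by
  have h1 : n - 1 + 1 = n := by omega
  have key : ∀ j ∈ range n,
      ((n-1).choose j : ℂ) * Rr a j * a (n-1-j+1)
        - ((n-1).choose j : ℂ) * Rr b j * b (n-1-j+1)
      = (if j = 0 then a n - b n else 0) + (if j = n-1 then 2*(a n - b n) else 0) := by
    intro j hj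
    have hj' := Finset.mem_range.mp hj
    rcases eq_or_ne j 0 with rfl | hj0
    · have e : n - 1 - 0 + 1 = n := by omega
      rw [e, if_pos rfl, if_neg (by omega), R_0 ha1, R_0 hb1]
      simp
    rcases eq_or_ne j (n-1) with rfl | hjn
    · have e : n - 1 - (n-1) + 1 = 1 := by omega
      rw [e, if_neg hj0, if_pos rfl, ha1, hb1, Nat.choose_self,
        L5 hn ha1 hb1 hlt]
      push_cast; ring
    · have e1 : j + 1 < n := by omega
      have e2 : n - 1 - j + 1 < n := by omega
      rw [L4 hlt j e1, hlt _ e2, if_neg hj0, if_neg hjn]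
      ring
  have hsum := Finset.sum_congr rfl key
  rw [Finset.sum_sub_distrib, Finset.sum_add_distrib,
    Finset.sum_ite_eq' (range n) 0, Finset.sum_ite_eq' (range n) (n-1),
    if_pos (Finset.mem_range.mpr (by omega)), if_pos (Finset.mem_range.mpr (by omega))] at hsum
  unfold Ss
  rw [h1]
  linear_combination hsum

include hn ha0 hb0 ha1 hb1 hlt in
lemma hT1 : T1 a n - T1 b n = (n.choose 3 : ℂ) * 6 * (a n - b n) := by
  have key : ∀ k ∈ range (n+1),
      (n.choose k : ℂ) * P3 a k * a (n-k+3) - (n.choose k : ℂ) * P3 b k * b (n-k+3)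
      = if k = 3 then (n.choose 3 : ℂ) * 6 * (a n - b n) else 0 := by
    intro k hk
    have hk' := Finset.mem_range.mp hk
    match k with
    | 0 => rw [P3_0 ha0, P3_0 hb0, if_neg (by omega)]; ring
    | 1 => rw [P3_1 ha0, P3_1 hb0, if_neg (by omega)]; ring
    | 2 => rw [P3_2 ha0, P3_2 hb0, if_neg (by omega)]; ring
    | 3 =>
      have e : n - 3 + 3 = n := by omega
      rw [e, P3_3 ha0 ha1, P3_3 hb0 hb1, if_pos rfl]
      ring
    | (m+4) =>
      have e : n - (m+4) + 3 < n := by omega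
      rw [L2 ha0 hb0 hlt (m+4) (by omega), hlt _ e, if_neg (by omega)]
      ring
  have hsum := Finset.sum_congr rfl key
  rw [Finset.sum_sub_distrib, Finset.sum_ite_eq' (range (n+1)) 3,
    if_pos (Finset.mem_range.mpr (by omega))] at hsum
  exact hsum

include hn ha0 hb0 ha1 hb1 hlt in
lemma hT2 : T2 a n - T2 b n = (n.choose 2 : ℂ) * 2 * (a n - b n) := by
  have key : ∀ k ∈ range (n+1),
      (n.choose k : ℂ) * Qq a k * a (n-k+2) - (n.choose k : ℂ) * Qq b k * b (n-k+2)
      = if k = 2 then (n.choose 2 : ℂ) * 2 * (a n - b n) else 0 := by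
    intro k hk
    have hk' := Finset.mem_range.mp hk
    match k with
    | 0 => rw [Q_0 ha0, Q_0 hb0, if_neg (by omega)]; ring
    | 1 => rw [Q_1 ha0, Q_1 hb0, if_neg (by omega)]; ring
    | 2 =>
      have e : n - 2 + 2 = n := by omega
      rw [e, Q_2 ha0 ha1, Q_2 hb0 hb1, if_pos rfl]
      ring
    | (m+3) =>
      have e : n - (m+3) + 2 < n := by omega
      rw [L3 ha0 hb0 hlt (m+3) (by omega), hlt _ e, if_neg (by omega)]
      ring
  have hsum := Finset.sum_congr rfl key
  rw [Finset.sum_sub_distrib, Finset.sum_ite_eq' (range (n+1)) 2,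
    if_pos (Finset.mem_range.mpr (by omega))] at hsum
  exact hsum

include hn ha0 hb0 ha1 hb1 hlt in
lemma hT3 : T3 a n - T3 b n = (n : ℂ) * (3 * (a n - b n)) + (a n - b n) := by
  have key : ∀ k ∈ range (n+1),
      (n.choose k : ℂ) * a k * Ss a (n-k) - (n.choose k : ℂ) * b k * Ss b (n-k)
      = (if k = 1 then (n : ℂ) * (3 * (a n - b n)) else 0)
        + (if k = n then a n - b n else 0) := by
    intro k hk
    have hk' := Finset.mem_range.mp hk
    rcases eq_or_ne k 0 with rfl | hk0
    · rw [ha0, hb0, if_neg (by omega), if_neg (by omega)]; ring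
    rcases eq_or_ne k 1 with rfl | hk1
    · have e : n - 1 + 1 = n := by omega
      rw [ha1, hb1, Nat.choose_one_right, L7 hn ha1 hb1 hlt,
        if_pos rfl, if_neg (by omega)]
      ring
    rcases eq_or_ne k n with rfl | hkn
    · rw [Nat.sub_self, S_0 ha1, S_0 hb1, Nat.choose_self,
        if_neg hk1, if_pos rfl]
      push_cast; ring
    · have e1 : k < n := by omega
      have e2 : n - k + 1 < n := by omega
      rw [hlt k e1, L6 hn hlt (n-k) (by omega), if_neg hk1, if_neg hkn]
      ring
  have hsum := Finset.sum_congr rfl key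
  rw [Finset.sum_sub_distrib, Finset.sum_add_distrib,
    Finset.sum_ite_eq' (range (n+1)) 1, Finset.sum_ite_eq' (range (n+1)) n,
    if_pos (Finset.mem_range.mpr (by omega)), if_pos (Finset.mem_range.mpr (by omega))] at hsum
  exact hsum

end diffs


end S18X

namespace S18N


lemma pow6 : ∀ n, 6 ≤ n → 6 * n ≤ 2 ^ n := by
  intro n hn
  induction n with
  | zero => omega
  | succ m ih =>
    rcases Nat.lt_or_ge m 6 with h | h
    · interval_cases m <;> simp_all <;> omega
    · have h1 := ih (by omega)
      have h2 : (6:ℕ) ≤ 2 ^ m := by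
        calc (6:ℕ) ≤ 2^6 := by norm_num
        _ ≤ 2^m := Nat.pow_le_pow_right (by norm_num) h
      rw [pow_succ]
      omega

lemma powC2 : ∀ n, 7 ≤ n → 6 * n.choose 2 ≤ 2 ^ n := by
  intro n hn
  induction n with
  | zero => omega
  | succ m ih =>
    rcases Nat.lt_or_ge m 7 with h | h
    · interval_cases m <;> simp_all [Nat.choose] <;> omega
    · have h1 := ih (by omega)
      have h2 := pow6 m (by omega)
      rw [Nat.choose_succ_succ, Nat.choose_one_right, pow_succ, Nat.mul_add]
      have eq1 : m.choose (Nat.succ 1) = m.choose 2 := rfl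
      omega

lemma powC3 : ∀ n, 9 ≤ n → 6 * n.choose 3 + 8 < 2 ^ (n+1) := by
  intro n hn
  induction n with
  | zero => omega
  | succ m ih =>
    rcases Nat.lt_or_ge m 9 with h | h
    · interval_cases m <;> simp_all [Nat.choose] <;> omega
    · have h1 := ih (by omega)
      have h2 := powC2 m (by omega)
      have h3 : (2:ℕ)^m ≤ 2^(m+1) := by rw [pow_succ]; omega
      rw [Nat.choose_succ_succ (m) 2, Nat.mul_add, pow_succ (2:ℕ) (m+1)]
      have eq2 : m.choose (Nat.succ 2) = m.choose 3 := rfl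
      omega

lemma natineq : ∀ n, 9 ≤ n → 6 * n.choose 3 + 6 * n + 2 < 2 ^ n + 6 * n.choose 2 := by
  intro n hn
  induction n with
  | zero => omega
  | succ m ih =>
    rcases Nat.lt_or_ge m 9 with h | h
    · interval_cases m <;> simp_all [Nat.choose] <;> omega
    · have h1 := ih (by omega)
      have h2 := powC3 m (by omega)
      rw [Nat.choose_succ_succ m 2, Nat.choose_succ_succ m 1, Nat.choose_one_right,
        pow_succ]
      have e : (2:ℕ)^(m+1) = 2^m*2 := pow_succ 2 m
      rw [e] at h2
      have eq1 : m.choose (Nat.succ 1) = m.choose 2 := rfl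
      have eq2 : m.choose (Nat.succ 2) = m.choose 3 := rfl
      omega


end S18N

namespace S18

open S18X

theorem recc {f : ℂ → ℂ} (hf : Differentiable ℂ f) (hd : deriv f 0 = 1)
    (hde : ∀ z : ℂ, (deriv f 0) ^ 3 * f (2 * z) =
      f z ^ 3 * iteratedDeriv 3 f z - 3 * f z ^ 2 * deriv f z * iteratedDeriv 2 f z +
        2 * f z * (deriv f z) ^ 3) (n : ℕ) :
    (2:ℂ)^n * iteratedDeriv n f 0 =
      T1 (fun k => iteratedDeriv k f 0) n - 3 * T2 (fun k => iteratedDeriv k f 0) n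
        + 2 * T3 (fun k => iteratedDeriv k f 0) n := by
  set a : ℕ → ℂ := fun k => iteratedDeriv k f 0 with ha
  have hdf : Differentiable ℂ (deriv f) := by
    have := diff_itd hf 1; rwa [iteratedDeriv_one] at this
  have hitd1 : ∀ m : ℕ, iteratedDeriv m (deriv f) 0 = a (m + 1) := by
    intro m
    rw [show deriv f = iteratedDeriv 1 f from (iteratedDeriv_one).symm, itd_itd]
  have hP2 : ∀ k, iteratedDeriv k (fun z => f z * f z) 0 = P2 a k := by
    intro k
    rw [congrFun (leibniz hf hf k) 0]
    simp [P2, ha]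
  have hP3 : ∀ k, iteratedDeriv k (fun z => (f z * f z) * f z) 0 = P3 a k := by
    intro k
    rw [congrFun (leibniz (hf.fun_mul hf) hf k) 0]
    simp only [P3]
    refine Finset.sum_congr rfl fun j _ => ?_
    rw [hP2 j]
  have hQ : ∀ k, iteratedDeriv k (fun z => (f z * f z) * deriv f z) 0 = Qq a k := by
    intro k
    rw [congrFun (leibniz (hf.fun_mul hf) hdf k) 0]
    simp only [Qq]
    refine Finset.sum_congr rfl fun j _ => ?_
    rw [hP2 j, hitd1]
  have hR : ∀ k, iteratedDeriv k (fun z => deriv f z * deriv f z) 0 = Rr a k := by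
    intro k
    rw [congrFun (leibniz hdf hdf k) 0]
    simp only [Rr]
    refine Finset.sum_congr rfl fun j hj => ?_
    rw [hitd1, hitd1]
  have hS : ∀ k, iteratedDeriv k (fun z => (deriv f z * deriv f z) * deriv f z) 0 = Ss a k := by
    intro k
    rw [congrFun (leibniz (hdf.fun_mul hdf) hdf k) 0]
    simp only [Ss]
    refine Finset.sum_congr rfl fun j _ => ?_
    rw [hR j, hitd1]
  have hA : iteratedDeriv n (fun z => ((f z * f z) * f z) * iteratedDeriv 3 f z) 0 = T1 a n := by
    rw [congrFun (leibniz ((hf.fun_mul hf).fun_mul hf) (diff_itd hf 3) n) 0]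
    simp only [T1]
    refine Finset.sum_congr rfl fun k _ => ?_
    rw [hP3 k, itd_itd]
  have hB : iteratedDeriv n (fun z => ((f z * f z) * deriv f z) * iteratedDeriv 2 f z) 0
      = T2 a n := by
    rw [congrFun (leibniz ((hf.fun_mul hf).fun_mul hdf) (diff_itd hf 2) n) 0]
    simp only [T2]
    refine Finset.sum_congr rfl fun k _ => ?_
    rw [hQ k, itd_itd]
  have hC : iteratedDeriv n (fun z => f z * ((deriv f z * deriv f z) * deriv f z)) 0
      = T3 a n := by
    rw [congrFun (leibniz hf ((hdf.fun_mul hdf).fun_mul hdf) n) 0]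
    simp only [T3]
    refine Finset.sum_congr rfl fun k _ => ?_
    rw [hS]
  -- rewrite the functional equation
  have hLHS : (fun z => f (2 * z)) = (fun z =>
      (fun z => ((f z * f z) * f z) * iteratedDeriv 3 f z) z
      - (fun z => 3 * (((f z * f z) * deriv f z) * iteratedDeriv 2 f z)) z
      + (fun z => 2 * (f z * ((deriv f z * deriv f z) * deriv f z))) z) := by
    funext z
    have h := hde z
    rw [hd] at h
    simp only []
    linear_combination h
  have hDA : Differentiable ℂ (fun z => ((f z * f z) * f z) * iteratedDeriv 3 f z) :=
    ((hf.mul hf).mul hf).mul (diff_itd hf 3)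
  have hDB : Differentiable ℂ (fun z => ((f z * f z) * deriv f z) * iteratedDeriv 2 f z) :=
    ((hf.mul hf).mul hdf).mul (diff_itd hf 2)
  have hDC : Differentiable ℂ (fun z => f z * ((deriv f z * deriv f z) * deriv f z)) :=
    hf.mul ((hdf.mul hdf).mul hdf)
  have step : iteratedDeriv n (fun z => f (2 * z)) 0 = T1 a n - 3 * T2 a n + 2 * T3 a n := by
    rw [hLHS]
    rw [itd_add (Differentiable.fun_sub hDA (hDB.const_mul 3)) (hDC.const_mul 2)]
    rw [itd_sub hDA (hDB.const_mul 3)]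
    rw [itd_cmul hDB 3, itd_cmul hDC 2, hA, hB, hC]
  rw [← step, itd_scale hf n 0]
  norm_num


theorem keylem {a b : ℕ → ℂ} {n : ℕ} (hn : 9 ≤ n)
    (ha0 : a 0 = 0) (hb0 : b 0 = 0) (ha1 : a 1 = 1) (hb1 : b 1 = 1)
    (hlt : ∀ k, k < n → a k = b k)
    (hEa : (2:ℂ)^n * a n = T1 a n - 3 * T2 a n + 2 * T3 a n)
    (hEb : (2:ℂ)^n * b n = T1 b n - 3 * T2 b n + 2 * T3 b n) : a n = b n := by
  have h1 := hT1 hn ha0 hb0 ha1 hb1 hlt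
  have h2 := hT2 hn ha0 hb0 ha1 hb1 hlt
  have h3 := hT3 hn ha0 hb0 ha1 hb1 hlt
  have hcomb : ((2:ℂ)^n - ((n.choose 3 : ℂ)*6 - (n.choose 2 : ℂ)*6 + 6*(n:ℂ) + 2))
      * (a n - b n) = 0 := by
    linear_combination hEa - hEb + h1 - 3*h2 + 2*h3
  have hne : ((2:ℂ)^n - ((n.choose 3 : ℂ)*6 - (n.choose 2 : ℂ)*6 + 6*(n:ℂ) + 2)) ≠ 0 := by
    intro h
    have h2' : ((2^n + 6 * n.choose 2 : ℕ) : ℂ) = ((6 * n.choose 3 + 6*n + 2 : ℕ) : ℂ) := by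
      push_cast
      linear_combination h
    have h3' := Nat.cast_inj (R := ℂ) |>.mp h2'
    have hin := S18N.natineq n hn
    omega
  rcases mul_eq_zero.mp hcomb with h | h
  · exact absurd h hne
  · exact sub_eq_zero.mp h


end S18

theorem stmt_18 (f₁ f₂ : ℂ → ℂ)
    (hf₁ : Differentiable ℂ f₁) (hf₂ : Differentiable ℂ f₂)
    (hodd₁ : ∀ z : ℂ, f₁ (-z) = -f₁ z) (hodd₂ : ∀ z : ℂ, f₂ (-z) = -f₂ z)
    (hd₁ : deriv f₁ 0 = 1) (hd₂ : deriv f₂ 0 = 1)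
    (hde₁ : ∀ z : ℂ, (deriv f₁ 0) ^ 3 * f₁ (2 * z) =
      f₁ z ^ 3 * iteratedDeriv 3 f₁ z - 3 * f₁ z ^ 2 * deriv f₁ z * iteratedDeriv 2 f₁ z +
        2 * f₁ z * (deriv f₁ z) ^ 3)
    (hde₂ : ∀ z : ℂ, (deriv f₂ 0) ^ 3 * f₂ (2 * z) =
      f₂ z ^ 3 * iteratedDeriv 3 f₂ z - 3 * f₂ z ^ 2 * deriv f₂ z * iteratedDeriv 2 f₂ z +
        2 * f₂ z * (deriv f₂ z) ^ 3)
    (hagree : ∀ n : ℕ, n < 9 → iteratedDeriv n f₁ 0 = iteratedDeriv n f₂ 0) :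
    f₁ = f₂ := by
  have hz₁ : f₁ 0 = 0 := by
    have h := hodd₁ 0
    rw [neg_zero] at h
    linear_combination (1/2 : ℂ) * h
  have hz₂ : f₂ 0 = 0 := by
    have h := hodd₂ 0
    rw [neg_zero] at h
    linear_combination (1/2 : ℂ) * h
  have ha0 : (fun k => iteratedDeriv k f₁ 0) 0 = 0 := by simpa using hz₁
  have hb0 : (fun k => iteratedDeriv k f₂ 0) 0 = 0 := by simpa using hz₂
  have ha1 : (fun k => iteratedDeriv k f₁ 0) 1 = 1 := by simpa [iteratedDeriv_one] using hd₁
  have hb1 : (fun k => iteratedDeriv k f₂ 0) 1 = 1 := by simpa [iteratedDeriv_one] using hd₂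
  have hall : ∀ n, iteratedDeriv n f₁ 0 = iteratedDeriv n f₂ 0 := by
    intro n
    induction n using Nat.strong_induction_on with
    | _ n ih =>
      rcases Nat.lt_or_ge n 9 with h | h
      · exact hagree n h
      · exact S18.keylem (a := fun k => iteratedDeriv k f₁ 0)
          (b := fun k => iteratedDeriv k f₂ 0) h ha0 hb0 ha1 hb1
          (fun k hk => ih k hk)
          (S18.recc hf₁ hd₁ hde₁ n) (S18.recc hf₂ hd₂ hde₂ n)
  funext z
  have e1 := Complex.taylorSeries_eq_of_entire' (c := 0) (z := z) hf₁
  have e2 := Complex.taylorSeries_eq_of_entire' (c := 0) (z := z) hf₂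
  rw [← e1, ← e2]
  exact tsum_congr fun n => by rw [hall n]
end
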